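/- Let s be a nonzero complex number, γ = s², N₁ a positive integer, and define R̂_{v,j} = s^{v+j-2} · Σ_{k=1}^{min(v,j)} C(v-1,k-1)·C(j-1,k-1)·(1 - 1/γ)^{k-1} for positive integers v, j. Then for every positive integer j the following polynomial identity in ε holds in ℂ[ε]: (1 − sε) · Σ_{v=1}^{N₁} R̂_{v,j+1} ε^{v-1} + (ε − s) · Σ_{v=1}^{N₁} R̂_{v,j} ε^{v-1} = (R̂_{N₁,j} − s·R̂_{N₁,j+1}) · ε^{N₁}. -/

import Mathlib

/-- The entry `R̂_{v,j}` (for `1 ≤ v, j`), where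
`R̂_{v,j} = s^{v+j-2} · Σ_{k=1}^{min(v,j)} C(v-1,k-1)·C(j-1,k-1)·(1 - 1/s²)^{k-1}`. -/
noncomputable def Rhat (s : ℂ) (v j : ℕ) : ℂ :=
  s ^ (v + j - 2) *
    ∑ k ∈ Finset.range (min v j),
      (Nat.choose (v - 1) k : ℂ) * (Nat.choose (j - 1) k : ℂ) * (1 - 1 / s ^ 2) ^ k

noncomputable def Fs (t : ℂ) (a b : ℕ) : ℂ :=
  ∑ k ∈ Finset.range (min a b + 1), (a.choose k : ℂ) * (b.choose k : ℂ) * t ^ k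

lemma Fs_ext (t : ℂ) (a b n : ℕ) (h : min a b + 1 ≤ n) :
    Fs t a b = ∑ k ∈ Finset.range n, (a.choose k : ℂ) * (b.choose k : ℂ) * t ^ k := by
  unfold Fs
  refine Finset.sum_subset (Finset.range_subset_range.2 h) ?_
  intro k _ hk
  simp only [Finset.mem_range, not_lt] at hk
  rcases Nat.lt_or_ge a b with hab | hab
  · have : a < k := by omega
    simp [Nat.choose_eq_zero_of_lt this]
  · have : b < k := by omega
    simp [Nat.choose_eq_zero_of_lt this]

lemma Fs_rec (t : ℂ) (a b : ℕ) :
    Fs t (a+1) (b+1) + Fs t a b = Fs t a (b+1) + Fs t (a+1) b + t * Fs t a b := by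
  set m := min a b with hm
  have h1 : Fs t (a+1) (b+1) = ∑ k ∈ Finset.range (m + 2),
      ((a+1).choose k : ℂ) * ((b+1).choose k : ℂ) * t ^ k := Fs_ext _ _ _ _ (by omega)
  have h2 : Fs t a (b+1) = ∑ k ∈ Finset.range (m + 2),
      (a.choose k : ℂ) * ((b+1).choose k : ℂ) * t ^ k := Fs_ext _ _ _ _ (by omega)
  have h3 : Fs t (a+1) b = ∑ k ∈ Finset.range (m + 2),
      ((a+1).choose k : ℂ) * (b.choose k : ℂ) * t ^ k := Fs_ext _ _ _ _ (by omega)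
  have h4 : Fs t a b = ∑ k ∈ Finset.range (m + 2),
      (a.choose k : ℂ) * (b.choose k : ℂ) * t ^ k := Fs_ext _ _ _ _ (by omega)
  have key : ∑ k ∈ Finset.range (m + 2),
      ( ((a+1).choose k : ℂ) * ((b+1).choose k : ℂ) * t ^ k
        - (a.choose k : ℂ) * ((b+1).choose k : ℂ) * t ^ k
        - ((a+1).choose k : ℂ) * (b.choose k : ℂ) * t ^ k
        + (a.choose k : ℂ) * (b.choose k : ℂ) * t ^ k )
      = t * Fs t a b := by
    rw [Finset.sum_range_succ']
    rw [Fs, Finset.mul_sum]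
    have hterm : ∀ k ∈ Finset.range (m+1),
        ( ((a+1).choose (k+1) : ℂ) * ((b+1).choose (k+1) : ℂ) * t ^ (k+1)
          - (a.choose (k+1) : ℂ) * ((b+1).choose (k+1) : ℂ) * t ^ (k+1)
          - ((a+1).choose (k+1) : ℂ) * (b.choose (k+1) : ℂ) * t ^ (k+1)
          + (a.choose (k+1) : ℂ) * (b.choose (k+1) : ℂ) * t ^ (k+1) )
        = t * ((a.choose k : ℂ) * (b.choose k : ℂ) * t ^ k) := by
      intro k _
      simp only [Nat.choose_succ_succ, Nat.cast_add]
      ring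
    rw [Finset.sum_congr rfl hterm]
    simp [hm]
  have hsplit : ∑ k ∈ Finset.range (m + 2),
      ( ((a+1).choose k : ℂ) * ((b+1).choose k : ℂ) * t ^ k
        - (a.choose k : ℂ) * ((b+1).choose k : ℂ) * t ^ k
        - ((a+1).choose k : ℂ) * (b.choose k : ℂ) * t ^ k
        + (a.choose k : ℂ) * (b.choose k : ℂ) * t ^ k )
      = (∑ k ∈ Finset.range (m + 2), ((a+1).choose k : ℂ) * ((b+1).choose k : ℂ) * t ^ k)
        - (∑ k ∈ Finset.range (m + 2), (a.choose k : ℂ) * ((b+1).choose k : ℂ) * t ^ k)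
        - (∑ k ∈ Finset.range (m + 2), ((a+1).choose k : ℂ) * (b.choose k : ℂ) * t ^ k)
        + (∑ k ∈ Finset.range (m + 2), (a.choose k : ℂ) * (b.choose k : ℂ) * t ^ k) := by
    rw [Finset.sum_add_distrib, Finset.sum_sub_distrib, Finset.sum_sub_distrib]
  rw [hsplit] at key
  rw [h4] at key
  rw [h1, h2, h3, h4]
  linear_combination key

lemma Rhat_eq_Fs (s : ℂ) (a b : ℕ) :
    Rhat s (a+1) (b+1) = s ^ (a + b) * Fs (1 - 1/s^2) a b := by
  unfold Rhat Fs
  have h1 : (a+1) + (b+1) - 2 = a + b := by omega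
  have h2 : min (a+1) (b+1) = min a b + 1 := by omega
  simp [h1, h2]

lemma Rhat_rec (s : ℂ) (hs : s ≠ 0) (a b : ℕ) :
    Rhat s (a+2) (b+2) + Rhat s (a+1) (b+1)
      = s * Rhat s (a+1) (b+2) + s * Rhat s (a+2) (b+1) := by
  set t := 1 - 1/s^2 with ht
  have e11 : Rhat s (a+2) (b+2) = s ^ (a + b + 2) * Fs t (a+1) (b+1) := by
    have := Rhat_eq_Fs s (a+1) (b+1); rw [this, ht]; ring_nf
  have e00 : Rhat s (a+1) (b+1) = s ^ (a + b) * Fs t a b := Rhat_eq_Fs s a b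
  have e01 : Rhat s (a+1) (b+2) = s ^ (a + b + 1) * Fs t a (b+1) := by
    have := Rhat_eq_Fs s a (b+1); rw [this, ht]; ring_nf
  have e10 : Rhat s (a+2) (b+1) = s ^ (a + b + 1) * Fs t (a+1) b := by
    have := Rhat_eq_Fs s (a+1) b; rw [this, ht]; ring_nf
  have hrec := Fs_rec t a b
  have hss : (s^2) * (1/s^2) = 1 := by field_simp
  have h2 : s^2 * Fs t (a+1) (b+1) + s^2 * Fs t a b
      = s^2 * Fs t a (b+1) + s^2 * Fs t (a+1) b + (s^2 - 1) * Fs t a b := by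
    rw [ht] at hrec ⊢
    linear_combination s^2 * hrec - Fs (1-1/s^2) a b * hss
  rw [e11, e00, e01, e10]
  linear_combination s ^ (a + b) * h2

lemma Rhat_one (s : ℂ) (j : ℕ) (hj : 0 < j) :
    Rhat s 1 (j+1) = s * Rhat s 1 j := by
  unfold Rhat
  have h1 : min 1 (j+1) = 1 := by omega
  have h2 : min 1 j = 1 := by omega
  have h3 : 1 + (j+1) - 2 = j := by omega
  have h4 : 1 + j - 2 = j - 1 := by omega
  have h5 : j = (j - 1) + 1 := by omega
  simp only [h1, h2, h3, h4]
  simp only [Finset.range_one, Finset.sum_singleton, pow_zero, mul_one, Nat.choose_zero_right,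
    Nat.cast_one, one_mul]
  conv_lhs => rw [h5, pow_succ]
  ring

open Polynomial in
theorem Rhat_truncated_generating_recursion (s : ℂ) (hs : s ≠ 0) (N₁ : ℕ) (hN₁ : 0 < N₁)
    (j : ℕ) (hj : 0 < j) :
    (1 - Polynomial.C s * Polynomial.X) *
          (∑ v ∈ Finset.Icc 1 N₁, Polynomial.C (Rhat s v (j + 1)) * Polynomial.X ^ (v - 1)) +
        (Polynomial.X - Polynomial.C s) *
          (∑ v ∈ Finset.Icc 1 N₁, Polynomial.C (Rhat s v j) * Polynomial.X ^ (v - 1)) =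
      Polynomial.C (Rhat s N₁ j - s * Rhat s N₁ (j + 1)) * Polynomial.X ^ N₁ := by
  induction N₁, hN₁ using Nat.le_induction with
  | base =>
      simp only [Finset.Icc_self, Finset.sum_singleton]
      have hb := Rhat_one s j hj
      rw [hb]
      simp only [map_sub, map_mul]
      ring
  | succ n hn IH =>
      rw [Finset.sum_Icc_succ_top (by omega : 1 ≤ n + 1),
          Finset.sum_Icc_succ_top (by omega : 1 ≤ n + 1)]
      obtain ⟨a, rfl⟩ : ∃ a, n = a + 1 := ⟨n - 1, by omega⟩
      obtain ⟨b, rfl⟩ : ∃ b, j = b + 1 := ⟨j - 1, by omega⟩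
      have hrec := Rhat_rec s hs a b
      have hkey : Rhat s (a+1) (b+1) - s * Rhat s (a+1) (b+2)
          = s * Rhat s (a+2) (b+1) - Rhat s (a+2) (b+2) := by
        linear_combination hrec
      calc (1 - C s * X) *
            ((∑ v ∈ Finset.Icc 1 (a+1), C (Rhat s v (b+1+1)) * X ^ (v-1))
              + C (Rhat s (a+1+1) (b+1+1)) * X ^ (a+1+1-1))
          + (X - C s) *
            ((∑ v ∈ Finset.Icc 1 (a+1), C (Rhat s v (b+1)) * X ^ (v-1))
              + C (Rhat s (a+1+1) (b+1)) * X ^ (a+1+1-1))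
          = ((1 - C s * X) *
              (∑ v ∈ Finset.Icc 1 (a+1), C (Rhat s v (b+1+1)) * X ^ (v-1))
            + (X - C s) *
              (∑ v ∈ Finset.Icc 1 (a+1), C (Rhat s v (b+1)) * X ^ (v-1)))
            + ((1 - C s * X) * (C (Rhat s (a+2) (b+2)) * X ^ (a+1))
            + (X - C s) * (C (Rhat s (a+2) (b+1)) * X ^ (a+1))) := by
            norm_num; ring
        _ = C (Rhat s (a+1) (b+1) - s * Rhat s (a+1) (b+1+1)) * X ^ (a+1)
            + ((1 - C s * X) * (C (Rhat s (a+2) (b+2)) * X ^ (a+1))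
            + (X - C s) * (C (Rhat s (a+2) (b+1)) * X ^ (a+1))) := by rw [IH]
        _ = C (Rhat s (a+1+1) (b+1) - s * Rhat s (a+1+1) (b+1+1)) * X ^ (a+1+1) := by
            rw [show b+1+1 = b+2 from rfl, show a+1+1 = a+2 from rfl, hkey]
            simp only [map_sub, map_mul]
            ring
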